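/- Let η : ℝ → E be a differentiable curve satisfying Newton's law η̇(t) = −λ(η(t) − η_q), where ψ is twice continuously differentiable. Then for every t, the function t ↦ F(η(t)) is differentiable and d/dt F(η(t)) = −λ ⟪η(t) − η_q, H(η(t)) (η(t) − η_q)⟫. In particular, if ψ is convex (so that H is positive semidefinite everywhere), then t ↦ F(η(t)) is nonincreasing. -/

import Mathlib

open scoped RealInnerProductSpace

section Aux

variable {n : ℕ}

local notation "E" => EuclideanSpace ℝ (Fin n)

lemma aux_fderiv_inner (ψ : E → ℝ) (x v : E) :
    fderiv ℝ ψ x v = ⟪gradient ψ x, v⟫ := by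
  rw [gradient]
  rw [← InnerProductSpace.toDual_apply_apply, LinearIsometryEquiv.apply_symm_apply]

lemma aux_grad_contDiff (ψ : E → ℝ) (hψ : ContDiff ℝ 2 ψ) :
    ContDiff ℝ 1 (gradient ψ) := by
  have h1 : ContDiff ℝ 1 (fderiv ℝ ψ) := hψ.fderiv_right (by norm_num)
  exact ((InnerProductSpace.toDual ℝ E).symm.contDiff).comp h1

lemma aux_deriv_nonneg_of_monotone {f : ℝ → ℝ} {f' : ℝ} (hm : Monotone f)
    (hd : HasDerivAt f f' 0) : 0 ≤ f' := by
  have ht : Filter.Tendsto (slope f 0) (nhdsWithin 0 {(0:ℝ)}ᶜ) (nhds f') :=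
    hasDerivAt_iff_tendsto_slope.mp hd
  refine ge_of_tendsto ht ?_
  filter_upwards [self_mem_nhdsWithin] with s hs
  have hs' : s ≠ 0 := hs
  rw [slope_def_field]
  rcases lt_or_gt_of_ne hs' with h | h
  · rw [div_nonneg_iff]
    right
    constructor
    · simpa using sub_nonpos.mpr (hm h.le)
    · simpa using h.le
  · rw [div_nonneg_iff]
    left
    constructor
    · simpa using sub_nonneg.mpr (hm h.le)
    · simpa using h.le

lemma aux_psd (ψ : E → ℝ) (hψ : ContDiff ℝ 2 ψ) (hc : ConvexOn ℝ Set.univ ψ)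
    (x v : E) : 0 ≤ ⟪v, fderiv ℝ (gradient ψ) x v⟫ := by
  set g := gradient ψ with hgdef
  have hg1 : ContDiff ℝ 1 g := aux_grad_contDiff ψ hψ
  have hgd : Differentiable ℝ g := hg1.differentiable (by norm_num)
  have hψd : Differentiable ℝ ψ := hψ.differentiable (by norm_num)
  have hcurve : ∀ s : ℝ, HasDerivAt (fun s : ℝ => x + s • v) v s := fun s => by
    simpa using ((hasDerivAt_id s).smul_const v).const_add x
  set φ := fun s : ℝ => ψ (x + s • v) with hφdef
  have hφ : ∀ s, HasDerivAt φ ⟪g (x + s • v), v⟫ s := by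
    intro s
    have h := ((hψd (x + s • v)).hasFDerivAt).comp_hasDerivAt s (hcurve s)
    rw [aux_fderiv_inner] at h
    exact h
  have hφc : ConvexOn ℝ Set.univ φ := by
    have h := hc.comp_affineMap (AffineMap.lineMap x (x + v) : ℝ →ᵃ[ℝ] E)
    have heq : φ = ψ ∘ (AffineMap.lineMap x (x + v) : ℝ →ᵃ[ℝ] E) := by
      funext s
      simp only [hφdef, Function.comp_apply, AffineMap.lineMap_apply, vsub_eq_sub,
        vadd_eq_add, add_sub_cancel_left]
      rw [add_comm]
    rw [heq]
    simpa using h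
  have hmono : Monotone (fun s : ℝ => ⟪g (x + s • v), v⟫) := by
    have hmo : MonotoneOn (deriv φ) Set.univ :=
      hφc.monotoneOn_deriv (fun s _ => (hφ s).differentiableAt)
    intro a b hab
    have := hmo (Set.mem_univ a) (Set.mem_univ b) hab
    rwa [(hφ a).deriv, (hφ b).deriv] at this
  have hD : HasDerivAt (fun s : ℝ => ⟪g (x + s • v), v⟫) ⟪fderiv ℝ g x v, v⟫ 0 := by
    have h1 : HasDerivAt (fun s : ℝ => g (x + s • v)) (fderiv ℝ g x v) 0 := by
      have h := ((hgd (x + (0:ℝ) • v)).hasFDerivAt).comp_hasDerivAt 0 (hcurve 0)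
      simp only [zero_smul, add_zero] at h
      exact h
    have h2 := h1.inner ℝ (hasDerivAt_const (0:ℝ) v)
    simpa using h2
  have := aux_deriv_nonneg_of_monotone hmono hD
  rwa [real_inner_comm] at this

end Aux

/-- Along a Newtonian relaxation `η̇ = −λ(η − ηq)`, the Bregman divergence `F` to the
target satisfies `d/dt F(η(t)) = −λ ⟪η − ηq, H(η)(η − ηq)⟫`; in particular, if `ψ` is
convex then `t ↦ F(η(t))` is nonincreasing. -/
theorem bregman_divergence_decreases_along_newton_flow
    (n : ℕ) (ψ : EuclideanSpace ℝ (Fin n) → ℝ) (hψ : ContDiff ℝ 2 ψ)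
    (ηq : EuclideanSpace ℝ (Fin n)) (lam : ℝ) (hlam : 0 < lam)
    (H : EuclideanSpace ℝ (Fin n) →
      EuclideanSpace ℝ (Fin n) →L[ℝ] EuclideanSpace ℝ (Fin n))
    (hH : ∀ η, H η = fderiv ℝ (gradient ψ) η)
    (F : EuclideanSpace ℝ (Fin n) → ℝ)
    (hF : ∀ η, F η = ψ ηq - ψ η - ⟪gradient ψ η, ηq - η⟫)
    (η : ℝ → EuclideanSpace ℝ (Fin n)) (hη : Differentiable ℝ η)
    (hnewton : ∀ t, deriv η t = (-lam) • (η t - ηq)) :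
    (∀ t, HasDerivAt (fun s => F (η s))
      (-lam * ⟪η t - ηq, H (η t) (η t - ηq)⟫) t) ∧
    (ConvexOn ℝ Set.univ ψ → Antitone (fun t => F (η t))) := by
  have hψd : Differentiable ℝ ψ := hψ.differentiable (by norm_num)
  have hgd : Differentiable ℝ (gradient ψ) :=
    (aux_grad_contDiff ψ hψ).differentiable (by norm_num)
  have key : ∀ t, HasDerivAt (fun s => F (η s))
      (-lam * ⟪η t - ηq, H (η t) (η t - ηq)⟫) t := by
    intro t
    have hηt : HasDerivAt η ((-lam) • (η t - ηq)) t := by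
      rw [← hnewton t]; exact (hη t).hasDerivAt
    set d : EuclideanSpace ℝ (Fin n) := (-lam) • (η t - ηq) with hd
    -- derivative of ψ ∘ η
    have hA : HasDerivAt (fun s => ψ (η s)) ⟪gradient ψ (η t), d⟫ t := by
      have h := ((hψd (η t)).hasFDerivAt).comp_hasDerivAt t hηt
      rw [aux_fderiv_inner] at h
      exact h
    -- derivative of gradient ψ ∘ η
    have hB : HasDerivAt (fun s => gradient ψ (η s))
        (fderiv ℝ (gradient ψ) (η t) d) t :=
      ((hgd (η t)).hasFDerivAt).comp_hasDerivAt t hηt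
    -- derivative of ηq - η
    have hC : HasDerivAt (fun s => ηq - η s) (-d) t := by
      have h := (hasDerivAt_const t ηq).sub hηt
      rw [zero_sub] at h
      exact h
    have hI : HasDerivAt (fun s => ⟪gradient ψ (η s), ηq - η s⟫)
        (⟪gradient ψ (η t), -d⟫ + ⟪fderiv ℝ (gradient ψ) (η t) d, ηq - η t⟫) t :=
      hB.inner ℝ hC
    have hfun : (fun s => F (η s))
        = fun s => ψ ηq - ψ (η s) - ⟪gradient ψ (η s), ηq - η s⟫ :=
      funext fun s => hF (η s)
    have hFη : HasDerivAt (fun s => F (η s))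
        (0 - ⟪gradient ψ (η t), d⟫ -
          (⟪gradient ψ (η t), -d⟫ + ⟪fderiv ℝ (gradient ψ) (η t) d, ηq - η t⟫)) t := by
      rw [hfun]
      exact ((hasDerivAt_const t (ψ ηq)).sub hA).sub hI
    convert hFη using 1
    rw [hH (η t), hd]
    rw [show ηq - η t = -(η t - ηq) from (neg_sub (η t) ηq).symm]
    have hsy : ⟪η t - ηq, (fderiv ℝ (gradient ψ) (η t)) (η t - ηq)⟫
        = ⟪(fderiv ℝ (gradient ψ) (η t)) (η t - ηq), η t - ηq⟫ := real_inner_comm _ _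
    rw [hsy]
    simp only [map_neg, map_smul, inner_smul_left, inner_smul_right, inner_neg_right,
      inner_neg_left, neg_neg, neg_smul, smul_neg, conj_trivial]
    ring
  refine ⟨key, ?_⟩
  intro hconv
  have hdiff : Differentiable ℝ (fun t => F (η t)) := fun t => (key t).differentiableAt
  refine antitone_of_deriv_nonpos hdiff ?_
  intro t
  rw [(key t).deriv]
  have hpsd : 0 ≤ ⟪η t - ηq, H (η t) (η t - ηq)⟫ := by
    rw [hH (η t)]
    exact aux_psd ψ hψ hconv (η t) (η t - ηq)
  have : (0:ℝ) ≤ lam * ⟪η t - ηq, H (η t) (η t - ηq)⟫ :=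
    mul_nonneg hlam.le hpsd
  linarith
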